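/- arXiv:1710.00412 — 2 statements merged into one kernel-verified Lean document; each statement's English description precedes it below -/
import Mathlib

section
/- The kernel of the ℤ-linear map Θ1 : ℤ[Γ] → ℤ[ℙ¹(ℚ)] defined by Θ1(γ) = [γ·∞] − [γ·0] is exactly the left ideal of ℤ[Γ] generated by 1+S and 1+U+U². -/
open MvPolynomial

/-- `SL(2, ℤ)`. -/
abbrev SL2Z := Matrix.SpecialLinearGroup (Fin 2) ℤ

instance : Fact (Even (Fintype.card (Fin 2))) := ⟨by decide⟩

/-- The subgroup `{±1}` of `SL(2,ℤ)`. -/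
def pmOne : Subgroup SL2Z := Subgroup.zpowers (-1 : SL2Z)

instance pmOne_normal : pmOne.Normal := by
  constructor
  intro x hx g
  obtain ⟨k, rfl⟩ := Subgroup.mem_zpowers_iff.mp hx
  have hc : Commute g ((-1 : SL2Z) ^ k) := by
    refine Commute.zpow_right ?_ k
    unfold Commute SemiconjBy
    rw [mul_neg_one, neg_one_mul]
  rw [hc.eq, mul_assoc, mul_inv_cancel, mul_one]
  exact Subgroup.mem_zpowers_iff.mpr ⟨k, rfl⟩

/-- `Γ = PSL(2, ℤ) = SL(2,ℤ)/{±1}`. -/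
abbrev PSL2Z := SL2Z ⧸ pmOne

/-- `S = [[0,-1],[1,0]]` in `Γ`. -/
def pS : PSL2Z := QuotientGroup.mk ⟨!![0, -1; 1, 0], by norm_num [Matrix.det_fin_two_of]⟩

/-- `U = [[0,1],[-1,1]]` in `Γ`. -/
def pU : PSL2Z := QuotientGroup.mk ⟨!![0, 1; -1, 1], by norm_num [Matrix.det_fin_two_of]⟩

/-- `T = [[1,1],[0,1]]` in `Γ`. -/
def pT : PSL2Z := QuotientGroup.mk ⟨!![1, 1; 0, 1], by norm_num [Matrix.det_fin_two_of]⟩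

/-- The cusps `ℙ¹(ℚ) = ℚ ∪ {∞}`. -/
abbrev Cusp := OnePoint ℚ

/-- The Möbius action of `SL(2, ℤ)` on the cusps. -/
def mobiusSL (γ : SL2Z) : Cusp → Cusp := fun x =>
  match x with
  | OnePoint.infty =>
      if ((γ.1 1 0 : ℤ) : ℚ) = 0 then OnePoint.infty
      else OnePoint.some (((γ.1 0 0 : ℤ) : ℚ) / ((γ.1 1 0 : ℤ) : ℚ))
  | OnePoint.some r =>
      if ((γ.1 1 0 : ℤ) : ℚ) * r + ((γ.1 1 1 : ℤ) : ℚ) = 0 then OnePoint.infty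
      else OnePoint.some
        ((((γ.1 0 0 : ℤ) : ℚ) * r + ((γ.1 0 1 : ℤ) : ℚ)) /
          (((γ.1 1 0 : ℤ) : ℚ) * r + ((γ.1 1 1 : ℤ) : ℚ)))

lemma mobiusSL_neg (γ : SL2Z) : mobiusSL (-γ) = mobiusSL γ := by
  funext x
  cases x with
  | none =>
      simp only [mobiusSL, Matrix.SpecialLinearGroup.coe_neg, Matrix.neg_apply, Int.cast_neg,
        neg_eq_zero, neg_div_neg_eq]
  | some r =>
      simp only [mobiusSL, Matrix.SpecialLinearGroup.coe_neg, Matrix.neg_apply, Int.cast_neg,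
        neg_mul, ← neg_add, neg_eq_zero, neg_div_neg_eq]

/-- The Möbius action of `Γ = PSL(2, ℤ)` on the cusps. -/
def mobius (q : PSL2Z) : Cusp → Cusp :=
  Quotient.liftOn q mobiusSL (by
    intro a b h
    replace h : a⁻¹ * b ∈ pmOne := QuotientGroup.leftRel_apply.mp h
    obtain ⟨k, hk⟩ := Subgroup.mem_zpowers_iff.mp h
    have hb : b = a * (-1 : SL2Z) ^ k := by rw [hk, mul_inv_cancel_left]
    rcases Int.even_or_odd k with he | ho
    · rw [hb, he.neg_one_zpow, mul_one]
    · obtain ⟨m, rfl⟩ := ho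
      have h2 : ((-1 : SL2Z)) ^ (2 * m) = 1 := Even.neg_one_zpow ⟨m, by ring⟩
      rw [hb, zpow_add_one, h2, one_mul, mul_neg_one, mobiusSL_neg])

/-- The cusp `∞`. -/
def cInf : Cusp := OnePoint.infty

/-- The cusp `0`. -/
def cZero : Cusp := OnePoint.some 0

/-- The map `Θ1 : ℤ[Γ] → ℤ[ℙ¹(ℚ)]`, `γ ↦ [γ·∞] - [γ·0]`, extended `ℤ`-linearly. -/
noncomputable def Theta1 (g : MonoidAlgebra ℤ PSL2Z) : FreeAbelianGroup Cusp :=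
  Finsupp.sum g.coeff fun γ n =>
    n • (FreeAbelianGroup.of (mobius γ cInf) - FreeAbelianGroup.of (mobius γ cZero))

-- Section 1: mobius action
section MobiusAct

lemma detA (A : SL2Z) : A.1 0 0 * A.1 1 1 - A.1 0 1 * A.1 1 0 = 1 := by
  have := A.2
  rwa [Matrix.det_fin_two] at this

lemma mul_entry (A B : SL2Z) (i j : Fin 2) :
    (A * B).1 i j = A.1 i 0 * B.1 0 j + A.1 i 1 * B.1 1 j := by
  rw [Matrix.SpecialLinearGroup.coe_mul, Matrix.mul_apply, Fin.sum_univ_two]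

lemma mobiusSL_infty (A : SL2Z) :
    mobiusSL A (none : Cusp) =
      if ((A.1 1 0 : ℤ) : ℚ) = 0 then (none : Cusp)
      else some (((A.1 0 0 : ℤ) : ℚ) / ((A.1 1 0 : ℤ) : ℚ)) := rfl

lemma mobiusSL_some (A : SL2Z) (r : ℚ) :
    mobiusSL A (some r) =
      if ((A.1 1 0 : ℤ) : ℚ) * r + ((A.1 1 1 : ℤ) : ℚ) = 0 then (none : Cusp)
      else some
        ((((A.1 0 0 : ℤ) : ℚ) * r + ((A.1 0 1 : ℤ) : ℚ)) /
          (((A.1 1 0 : ℤ) : ℚ) * r + ((A.1 1 1 : ℤ) : ℚ))) := rfl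

lemma mobiusSL_mul (A B : SL2Z) (x : Cusp) :
    mobiusSL (A * B) x = mobiusSL A (mobiusSL B x) := by
  have hA : ((A.1 0 0 : ℤ) : ℚ) * ((A.1 1 1 : ℤ) : ℚ) - ((A.1 0 1 : ℤ) : ℚ) * ((A.1 1 0 : ℤ) : ℚ) = 1 := by
    exact_mod_cast congrArg (fun z : ℤ => (z : ℚ)) (detA A)
  have hB : ((B.1 0 0 : ℤ) : ℚ) * ((B.1 1 1 : ℤ) : ℚ) - ((B.1 0 1 : ℤ) : ℚ) * ((B.1 1 0 : ℤ) : ℚ) = 1 := by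
    exact_mod_cast congrArg (fun z : ℤ => (z : ℚ)) (detA B)
  set a := ((A.1 0 0 : ℤ) : ℚ) with ha
  set b := ((A.1 0 1 : ℤ) : ℚ) with hb
  set c := ((A.1 1 0 : ℤ) : ℚ) with hc
  set d := ((A.1 1 1 : ℤ) : ℚ) with hd
  set a' := ((B.1 0 0 : ℤ) : ℚ) with ha'
  set b' := ((B.1 0 1 : ℤ) : ℚ) with hb'
  set c' := ((B.1 1 0 : ℤ) : ℚ) with hc'
  set d' := ((B.1 1 1 : ℤ) : ℚ) with hd'
  have e00 : (((A*B).1 0 0 : ℤ) : ℚ) = a*a' + b*c' := by rw [mul_entry]; push_cast; ring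
  have e01 : (((A*B).1 0 1 : ℤ) : ℚ) = a*b' + b*d' := by rw [mul_entry]; push_cast; ring
  have e10 : (((A*B).1 1 0 : ℤ) : ℚ) = c*a' + d*c' := by rw [mul_entry]; push_cast; ring
  have e11 : (((A*B).1 1 1 : ℤ) : ℚ) = c*b' + d*d' := by rw [mul_entry]; push_cast; ring
  cases x with
  | none =>
      by_cases h1 : c' = 0
      · have ha'0 : a' ≠ 0 := by
          intro h; rw [h1, h] at hB; norm_num at hB
        have hBv : mobiusSL B (none : Cusp) = (none : Cusp) := by
          rw [mobiusSL_infty, if_pos h1]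
        rw [hBv, mobiusSL_infty, mobiusSL_infty]
        simp only [e00, e10, h1, mul_zero, add_zero]
        by_cases h2 : c = 0
        · rw [if_pos (by rw [h2, zero_mul]), if_pos h2]
        · rw [if_neg (mul_ne_zero h2 ha'0), if_neg h2]
          congr 1
          rw [mul_div_mul_right _ _ ha'0]
      · have hBv : mobiusSL B (none : Cusp) = (some (a'/c') : Cusp) := by
          rw [mobiusSL_infty, if_neg h1]
        rw [hBv, mobiusSL_infty, mobiusSL_some]
        simp only [e00, e10]
        by_cases h2 : c * (a'/c') + d = 0
        · rw [if_pos h2, if_pos (by field_simp at h2; linear_combination h2)]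
        · have hne : c*a' + d*c' ≠ 0 := by
            intro h
            apply h2
            field_simp
            linear_combination h
          rw [if_neg hne, if_neg h2]
          congr 1
          field_simp
          rw [← ha, ← hb, ← hc, ← hd]; ring
  | some r =>
      set e := c' * r + d' with he
      set n := a' * r + b' with hn
      have key : a' * e - c' * n = 1 := by rw [he, hn]; linear_combination hB
      have lhsden : (c*a' + d*c') * r + (c*b' + d*d') = c * n + d * e := by
        rw [hn, he]; ring
      have lhsnum : (a*a' + b*c') * r + (a*b' + b*d') = a * n + b * e := by
        rw [hn, he]; ring
      by_cases h1 : e = 0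
      · have hc'0 : c' ≠ 0 := by
          intro h; rw [h1, h] at key; norm_num at key
        have hn0 : n ≠ 0 := by
          intro h; rw [h1, h] at key; norm_num at key
        have hBv : mobiusSL B (some r) = (none : Cusp) := by
          rw [mobiusSL_some, if_pos h1]
        rw [hBv, mobiusSL_some, mobiusSL_infty]
        simp only [e00, e01, e10, e11, lhsden, lhsnum, h1, mul_zero, add_zero]
        by_cases h2 : c = 0
        · rw [if_pos (by rw [h2, zero_mul]), if_pos h2]
        · rw [if_neg (mul_ne_zero h2 hn0), if_neg h2]
          congr 1
          rw [mul_div_mul_right _ _ hn0]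
      · have hBv : mobiusSL B (some r) = (some (n/e) : Cusp) := by
          rw [mobiusSL_some, if_neg h1]
        rw [hBv, mobiusSL_some, mobiusSL_some]
        simp only [e00, e01, e10, e11, lhsden, lhsnum]
        by_cases h2 : c * (n/e) + d = 0
        · rw [if_pos h2, if_pos (by field_simp at h2; linear_combination h2)]
        · have hne : c * n + d * e ≠ 0 := by
            intro h
            apply h2
            field_simp
            linear_combination h
          rw [if_neg hne, if_neg h2]
          congr 1
          field_simp
          rw [← ha, ← hb, ← hc, ← hd]; ring

lemma mobius_mk (A : SL2Z) : mobius (QuotientGroup.mk A) = mobiusSL A := rfl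

lemma mobius_mul (g h : PSL2Z) (x : Cusp) : mobius (g * h) x = mobius g (mobius h x) := by
  induction g using QuotientGroup.induction_on with
  | H A =>
    induction h using QuotientGroup.induction_on with
    | H B => rw [← QuotientGroup.mk_mul, mobius_mk, mobius_mk, mobius_mk, mobiusSL_mul]

lemma mobius_one (x : Cusp) : mobius (1 : PSL2Z) x = x := by
  have h1 : (1 : PSL2Z) = QuotientGroup.mk (1 : SL2Z) := rfl
  rw [h1, mobius_mk]
  cases x with
  | none =>
      rw [mobiusSL_infty, if_pos]
      simp
  | some r =>
      rw [mobiusSL_some, if_neg]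
      · have : ((((1:SL2Z).1 0 0 : ℤ) : ℚ) * r + (((1:SL2Z).1 0 1 : ℤ) : ℚ)) /
            ((((1:SL2Z).1 1 0 : ℤ) : ℚ) * r + (((1:SL2Z).1 1 1 : ℤ) : ℚ)) = r := by
          simp
        rw [this]
      · simp

lemma mobius_inj {g : PSL2Z} {x y : Cusp} (h : mobius g x = mobius g y) : x = y := by
  have := congrArg (mobius g⁻¹) h
  rwa [← mobius_mul, ← mobius_mul, inv_mul_cancel, mobius_one, mobius_one] at this

end MobiusAct
-- Section 2: uniqueness, generators, basic evals
section Uniq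

lemma neg_one_mem_pmOne : (-1 : SL2Z) ∈ pmOne := Subgroup.mem_zpowers _

lemma mk_neg (A : SL2Z) : (QuotientGroup.mk (-A) : PSL2Z) = QuotientGroup.mk A := by
  rw [QuotientGroup.eq]
  have h : (-A)⁻¹ * A = -1 := by
    have h2 : -A = (-1) * A := by
      apply Matrix.SpecialLinearGroup.ext
      intro i j
      simp
    rw [h2, mul_inv_rev, mul_assoc]
    simp
  rw [h]
  exact neg_one_mem_pmOne

lemma cInf_eq : cInf = (none : Cusp) := rfl
lemma cZero_eq : cZero = (some (0:ℚ) : Cusp) := rfl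

lemma fix01_eq_one (g : PSL2Z) (h0 : mobius g cZero = cZero) (hinf : mobius g cInf = cInf) :
    g = 1 := by
  induction g using QuotientGroup.induction_on with
  | H A =>
    rw [cZero_eq, mobius_mk] at h0
    rw [cInf_eq, mobius_mk, mobiusSL_infty] at hinf
    by_cases hc : ((A.1 1 0 : ℤ) : ℚ) = 0
    · have hcZ : A.1 1 0 = 0 := by exact_mod_cast hc
      have hdet := detA A
      rw [hcZ, mul_zero, sub_zero] at hdet
      have hdQ : ((A.1 1 1 : ℤ) : ℚ) ≠ 0 := by
        intro h
        have h2 : A.1 1 1 = 0 := by exact_mod_cast h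
        rw [h2, mul_zero] at hdet; norm_num at hdet
      rw [mobiusSL_some, if_neg (by rw [hc]; simpa using hdQ)] at h0
      have hb : ((A.1 0 1 : ℤ) : ℚ) / ((A.1 1 1 : ℤ) : ℚ) = 0 := by
        have h3 := Option.some.inj h0
        rw [hc] at h3
        simpa using h3
      have hbZ : A.1 0 1 = 0 := by
        rcases div_eq_zero_iff.mp hb with h | h
        · exact_mod_cast h
        · exact absurd h hdQ
      rcases Int.mul_eq_one_iff_eq_one_or_neg_one.mp hdet with ⟨h1, h2⟩ | ⟨h1, h2⟩
      · have : A = 1 := by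
          apply Matrix.SpecialLinearGroup.ext
          intro i j
          fin_cases i <;> fin_cases j <;>
            simp [h1, h2, hbZ, hcZ]
        rw [this]
        exact (QuotientGroup.eq_one_iff _).mpr (one_mem _)
      · have : A = -1 := by
          apply Matrix.SpecialLinearGroup.ext
          intro i j
          fin_cases i <;> fin_cases j <;>
            simp [h1, h2, hbZ, hcZ]
        rw [this]
        exact (QuotientGroup.eq_one_iff _).mpr neg_one_mem_pmOne
    · rw [if_neg hc] at hinf
      exact absurd hinf (by simp)

lemma endpoints_inj {g g' : PSL2Z} (h0 : mobius g cZero = mobius g' cZero)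
    (hinf : mobius g cInf = mobius g' cInf) : g = g' := by
  have e0 : mobius (g'⁻¹ * g) cZero = cZero := by
    rw [mobius_mul, h0, ← mobius_mul, inv_mul_cancel, mobius_one]
  have einf : mobius (g'⁻¹ * g) cInf = cInf := by
    rw [mobius_mul, hinf, ← mobius_mul, inv_mul_cancel, mobius_one]
  have := fix01_eq_one _ e0 einf
  rw [inv_mul_eq_one] at this
  exact this.symm

-- evaluations of generators
def SmatS : SL2Z := ⟨!![0, -1; 1, 0], by norm_num [Matrix.det_fin_two_of]⟩
def SmatU : SL2Z := ⟨!![0, 1; -1, 1], by norm_num [Matrix.det_fin_two_of]⟩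
lemma pS_eq : pS = QuotientGroup.mk SmatS := rfl
lemma pU_eq : pU = QuotientGroup.mk SmatU := rfl
lemma mobius_pS_inf : mobius pS cInf = cZero := by
  rw [cInf_eq, cZero_eq, pS_eq, mobius_mk, mobiusSL_infty]
  norm_num [SmatS, SmatU]
  rfl

lemma mobius_pS_zero : mobius pS cZero = cInf := by
  rw [cInf_eq, cZero_eq, pS_eq, mobius_mk, mobiusSL_some]
  norm_num [SmatS, SmatU]
  rfl

lemma mobius_pS_one : mobius pS (some 1) = some (-1) := by
  rw [pS_eq, mobius_mk, mobiusSL_some]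
  norm_num [SmatS, SmatU]
  rfl

lemma mobius_pU_inf : mobius pU cInf = cZero := by
  rw [cInf_eq, cZero_eq, pU_eq, mobius_mk, mobiusSL_infty]
  norm_num [SmatS, SmatU]
  rfl

lemma mobius_pU_zero : mobius pU cZero = some 1 := by
  rw [cZero_eq, pU_eq, mobius_mk, mobiusSL_some]
  norm_num [SmatS, SmatU]
  rfl

lemma mobius_pU_one : mobius pU (some 1) = cInf := by
  rw [cInf_eq, pU_eq, mobius_mk, mobiusSL_some]
  norm_num [SmatS, SmatU]
  rfl

lemma pS_sq : pS * pS = 1 := by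
  rw [pS_eq, ← QuotientGroup.mk_mul]
  apply (QuotientGroup.eq_one_iff _).mpr
  have h : ∀ B : SL2Z, B * B = -1 → B * B ∈ pmOne := fun B hB => hB ▸ neg_one_mem_pmOne
  apply h
  apply Matrix.SpecialLinearGroup.ext
  intro i j
  rw [mul_entry]
  fin_cases i <;> fin_cases j <;>
    norm_num [SmatS, Matrix.SpecialLinearGroup.coe_neg, Matrix.SpecialLinearGroup.coe_one]

end Uniq
-- Section 3: denominators, edges, parents, paths
section Edge

def cden : Cusp → ℕ
  | none => 0
  | some r => r.den

lemma cden_none : cden none = 0 := rfl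
lemma cden_some (r : ℚ) : cden (some r) = r.den := rfl

lemma cden_eq_zero {x : Cusp} : cden x = 0 ↔ x = none := by
  cases x with
  | none => exact ⟨fun _ => rfl, fun _ => rfl⟩
  | some r => simpa [cden] using r.den_nz

lemma num_den_div (a b : ℤ) (hb : 0 < b) (h : IsCoprime a b) :
    ((a:ℚ)/b).num = a ∧ (((a:ℚ)/b).den : ℤ) = b := by
  obtain ⟨n, rfl⟩ : ∃ n : ℕ, b = (n : ℤ) := ⟨b.toNat, (Int.toNat_of_nonneg hb.le).symm⟩
  have hn : n ≠ 0 := by exact_mod_cast hb.ne'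
  have hcop : a.natAbs.Coprime n := by
    have := Int.isCoprime_iff_gcd_eq_one.mp h
    simpa [Int.gcd] using this
  have key : (a:ℚ)/(n:ℤ) = (⟨a, n, hn, hcop⟩ : ℚ) := by
    rw [Rat.mk_eq_divInt, Rat.divInt_eq_div]
  rw [key]
  exact ⟨rfl, rfl⟩

/-- `s₀` of the parent construction -/
def edgeS (r : ℚ) : ℤ := (Int.gcdA r.num (r.den : ℤ)) % (r.den : ℤ)
/-- `r₀` of the parent construction -/
def edgeR (r : ℚ) : ℤ := (r.num * edgeS r - 1) / (r.den : ℤ)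

lemma qden_pos (r : ℚ) : (0:ℤ) < (r.den : ℤ) := by exact_mod_cast r.pos

lemma edgeS_nonneg (r : ℚ) : 0 ≤ edgeS r := Int.emod_nonneg _ (qden_pos r).ne'

lemma edgeS_lt (r : ℚ) : edgeS r < (r.den : ℤ) := Int.emod_lt_of_pos _ (qden_pos r)

lemma edge_dvd (r : ℚ) : (r.den : ℤ) ∣ r.num * edgeS r - 1 := by
  have hg : Int.gcd r.num (r.den : ℤ) = 1 := by
    have := r.reduced
    simpa [Int.gcd] using this
  have hb := Int.gcd_eq_gcd_ab r.num (r.den : ℤ)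
  rw [hg] at hb
  set A := Int.gcdA r.num (r.den : ℤ) with hA
  set B := Int.gcdB r.num (r.den : ℤ) with hB
  have hmod : edgeS r = A - (r.den : ℤ) * (A / (r.den : ℤ)) := by
    rw [edgeS, Int.emod_def]
  refine ⟨-B - r.num * (A / (r.den : ℤ)), ?_⟩
  rw [hmod]
  push_cast at hb
  linear_combination -hb

lemma edge_det (r : ℚ) : r.num * edgeS r - (r.den : ℤ) * edgeR r = 1 := by
  have h2 := Int.ediv_mul_cancel (edge_dvd r)
  rw [edgeR]
  linear_combination -h2

/-- the matrix of the edge from `parent r` to `r` -/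
def gEMat (r : ℚ) : SL2Z :=
  ⟨!![r.num, edgeR r; (r.den : ℤ), edgeS r], by
    rw [Matrix.det_fin_two_of]
    linear_combination edge_det r⟩

lemma gEMat_00 (r : ℚ) : (gEMat r).1 0 0 = r.num := rfl
lemma gEMat_01 (r : ℚ) : (gEMat r).1 0 1 = edgeR r := rfl
lemma gEMat_10 (r : ℚ) : (gEMat r).1 1 0 = (r.den : ℤ) := rfl
lemma gEMat_11 (r : ℚ) : (gEMat r).1 1 1 = edgeS r := rfl

/-- the edge from `parent r` to `r` in `PSL2Z` -/
def gE (r : ℚ) : PSL2Z := QuotientGroup.mk (gEMat r)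

/-- the parent cusp -/
def parentC : Cusp → Cusp
  | none => none
  | some r => mobius (gE r) cZero

lemma gE_inf (r : ℚ) : mobius (gE r) cInf = some r := by
  rw [cInf_eq, gE, mobius_mk, mobiusSL_infty, if_neg]
  · rw [gEMat_00, gEMat_10]
    norm_num [Rat.num_div_den]
    rfl
  · rw [gEMat_10]
    exact_mod_cast (qden_pos r).ne'

lemma gE_zero (r : ℚ) : mobius (gE r) cZero = parentC (some r) := rfl

lemma parentC_eq (r : ℚ) : parentC (some r) =
    (if ((edgeS r : ℤ) : ℚ) = 0 then none
      else some (((edgeR r : ℤ) : ℚ) / ((edgeS r : ℤ) : ℚ))) := by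
  show mobius (gE r) cZero = _
  rw [cZero_eq, gE, mobius_mk, mobiusSL_some, gEMat_00, gEMat_01, gEMat_10, gEMat_11]
  norm_num
  rfl

lemma coprime_edgeRS (r : ℚ) : IsCoprime (edgeR r) (edgeS r) :=
  ⟨-(r.den : ℤ), r.num, by linear_combination edge_det r⟩

lemma parent_den_lt (r : ℚ) : cden (parentC (some r)) < cden (some r) := by
  rw [parentC_eq, cden_some]
  by_cases h : ((edgeS r : ℤ) : ℚ) = 0
  · rw [if_pos h, cden_none]
    exact r.pos
  · rw [if_neg h]
    have hpos : 0 < edgeS r := by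
      rcases lt_or_eq_of_le (edgeS_nonneg r) with h' | h'
      · exact h'
      · exact absurd (by exact_mod_cast h'.symm : ((edgeS r : ℤ):ℚ) = 0) h
    have := (num_den_div (edgeR r) (edgeS r) hpos (coprime_edgeRS r)).2
    rw [cden_some]
    have hlt := edgeS_lt r
    omega

/-- path from `∞` to `x` in the Farey graph, as an element of `ℤ[Γ]` -/
noncomputable def hC : Cusp → MonoidAlgebra ℤ PSL2Z
  | none => 0
  | some r => hC (parentC (some r)) + MonoidAlgebra.of ℤ PSL2Z (gE r)
termination_by x => cden x
decreasing_by exact parent_den_lt r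

lemma hC_none : hC none = 0 := by rw [hC]
lemma hC_some (r : ℚ) :
    hC (some r) = hC (parentC (some r)) + MonoidAlgebra.of ℤ PSL2Z (gE r) := by rw [hC]

end Edge
-- Section 4: the trichotomy lemma
section Trich

lemma den_int_div (a b : ℤ) (hb : b ≠ 0) (h : IsCoprime a b) :
    (((a:ℚ)/b).den : ℤ) = |b| := by
  rcases hb.lt_or_gt with hneg | hpos
  · have : (a:ℚ)/b = ((-a : ℤ):ℚ)/((-b : ℤ):ℚ) := by
      push_cast
      rw [neg_div_neg_eq]
    rw [this, (num_den_div (-a) (-b) (by omega) h.neg_neg).2, abs_of_neg hneg]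
  · rw [(num_den_div a b hpos h).2, abs_of_pos hpos]

lemma trichotomySL (A : SL2Z) (hδ : 0 < A.1 1 1)
    (hden : cden (mobiusSL A cInf) ≤ cden (mobiusSL A cZero)) :
    mobiusSL A cInf = parentC (mobiusSL A cZero) ∨
    mobiusSL A (some 1) = parentC (mobiusSL A cZero) ∨
    mobiusSL A (some (-1)) = parentC (mobiusSL A cZero) := by
  set α := A.1 0 0 with hα'
  set β := A.1 0 1 with hβ'
  set γ := A.1 1 0 with hγ'
  set δ := A.1 1 1 with hδ'
  have hdet : α * δ - β * γ = 1 := detA A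
  have hδQ : ((δ:ℤ):ℚ) ≠ 0 := by exact_mod_cast hδ.ne'
  have hcop : IsCoprime β δ := ⟨-γ, α, by linear_combination hdet⟩
  have h0 : mobiusSL A cZero = some (((β:ℤ):ℚ)/((δ:ℤ):ℚ)) := by
    rw [cZero_eq, mobiusSL_some, if_neg (by rw [← hγ', ← hδ']; simpa using hδQ)]
    rw [← hα', ← hβ', ← hγ', ← hδ']
    norm_num
    rfl
  set rA : ℚ := ((β:ℤ):ℚ)/((δ:ℤ):ℚ) with hrA
  have hnum : rA.num = β := (num_den_div β δ hδ hcop).1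
  have hden' : ((rA.den : ℕ) : ℤ) = δ := (num_den_div β δ hδ hcop).2
  set s0 := edgeS rA with hs0
  set r0 := edgeR rA with hr0
  have hdet2 : β * s0 - δ * r0 = 1 := by
    have := edge_det rA
    rwa [hnum, hden'] at this
  have hs0nn : 0 ≤ s0 := edgeS_nonneg rA
  have hs0lt : s0 < δ := by
    have := edgeS_lt rA
    rwa [hden'] at this
  -- bound on |γ|
  have hγbound : |γ| ≤ δ := by
    have hcdenZ : cden (mobiusSL A cZero) = rA.den := by rw [h0, cden_some]
    have hcdenI : (cden (mobiusSL A cInf) : ℤ) = |γ| := by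
      rw [cInf_eq, mobiusSL_infty]
      by_cases hγ0 : ((γ:ℤ):ℚ) = 0
      · have : γ = 0 := by exact_mod_cast hγ0
        rw [if_pos (by rw [← hγ']; exact hγ0), this]
        simp [cden_none]
      · have hγZ : γ ≠ 0 := by exact_mod_cast hγ0
        have hcop2 : IsCoprime α γ := ⟨δ, -β, by linear_combination hdet⟩
        rw [if_neg (by rw [← hγ']; exact hγ0), cden_some, ← hα', ← hγ']
        exact den_int_div α γ hγZ hcop2
    rw [hcdenZ] at hden
    have : ((cden (mobiusSL A cInf)):ℤ) ≤ ((rA.den : ℕ):ℤ) := by exact_mod_cast hden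
    rw [hcdenI, hden'] at this
    exact this
  -- the parameter t
  have hkey : β * (γ + s0) = δ * (α + r0) := by linear_combination -hdet + hdet2 + s0 * (rfl : β = β)
  have hdvd : δ ∣ γ + s0 := by
    have h1 : δ ∣ β * (γ + s0) := ⟨α + r0, hkey⟩
    exact (hcop.symm).dvd_of_dvd_mul_left h1
  obtain ⟨t, ht⟩ := hdvd
  have hαt : α = β * t - r0 := by
    have h2 : δ * (β * t) = δ * (α + r0) := by rw [← hkey, ht]; ring
    have h3 := mul_left_cancel₀ hδ.ne' h2
    linarith
  have hγt : γ = δ * t - s0 := by omega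
  have habs := abs_le.mp hγbound
  have ht1 : t ≤ 1 := by nlinarith [habs.2]
  have htm1 : -1 ≤ t := by nlinarith [habs.1]
  rw [h0]
  have hparent := parentC_eq rA
  rw [← hs0, ← hr0] at hparent
  interval_cases t
  · -- t = -1 : s0 = 0, g(1) = parent
    have hs00 : s0 = 0 := by nlinarith [habs.1]
    right; left
    rw [hparent, if_pos (by rw [hs00]; norm_num), mobiusSL_some, if_pos]
    rw [← hγ', ← hδ']
    have : γ = -δ := by omega
    rw [this]
    push_cast
    ring
  · -- t = 0 : g(∞) = parent
    left
    have hγs : γ = -s0 := by omega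
    have hαs : α = -r0 := by omega
    rw [cInf_eq, mobiusSL_infty, hparent, ← hγ', ← hα', hγs, hαs]
    by_cases hs00 : ((s0:ℤ):ℚ) = 0
    · have hz : s0 = 0 := by exact_mod_cast hs00
      rw [if_pos (by rw [hz]; norm_num), if_pos hs00]
    · rw [if_neg (by push_cast; simpa using hs00), if_neg hs00]
      push_cast
      rw [neg_div_neg_eq]
  · -- t = 1 : g(-1) = parent
    right; right
    have hγs : γ = δ - s0 := by omega
    have hαs : α = β - r0 := by omega
    rw [mobiusSL_some, hparent, ← hγ', ← hδ', ← hα', ← hβ', hγs, hαs]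
    have hcond : ((δ - s0 : ℤ):ℚ) * (-1) + ((δ:ℤ):ℚ) = ((s0:ℤ):ℚ) := by push_cast; ring
    by_cases hs00 : ((s0:ℤ):ℚ) = 0
    · rw [if_pos (by rw [hcond, hs00]), if_pos hs00]
    · rw [if_neg (by rw [hcond]; exact hs00), if_neg hs00]
      congr 1
      rw [hcond]
      have hnum2 : ((β - r0 : ℤ):ℚ) * (-1) + ((β:ℤ):ℚ) = ((r0:ℤ):ℚ) := by push_cast; ring
      rw [hnum2]

lemma trichotomy (g : PSL2Z) (hA : mobius g cZero ≠ cInf)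
    (hden : cden (mobius g cInf) ≤ cden (mobius g cZero)) :
    mobius g cInf = parentC (mobius g cZero) ∨
    mobius g (some 1) = parentC (mobius g cZero) ∨
    mobius g (some (-1)) = parentC (mobius g cZero) := by
  induction g using QuotientGroup.induction_on with
  | H A =>
    rw [mobius_mk] at *
    have hδ0 : A.1 1 1 ≠ 0 := by
      intro h
      apply hA
      rw [cZero_eq, cInf_eq, mobiusSL_some, if_pos]
      rw [h]
      norm_num
    rcases hδ0.lt_or_gt with hneg | hpos
    · have hmob : mobiusSL A = mobiusSL (-A) := (mobiusSL_neg A).symm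
      rw [hmob] at hden hA ⊢
      apply trichotomySL (-A)
      · rw [Matrix.SpecialLinearGroup.coe_neg, Matrix.neg_apply]
        omega
      · exact hden
    · exact trichotomySL A hpos hden
end Trich
-- Section 5: the ideal and the key lemma
section Main

noncomputable abbrev MAZ := MonoidAlgebra ℤ PSL2Z

/-- the Manin ideal -/
noncomputable def ManinJ : Ideal MAZ :=
  Ideal.span {(1 : MAZ) + MonoidAlgebra.of ℤ PSL2Z pS,
    (1 : MAZ) + MonoidAlgebra.of ℤ PSL2Z pU + MonoidAlgebra.of ℤ PSL2Z (pU ^ 2)}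

local notation "oF" => MonoidAlgebra.of ℤ PSL2Z

lemma rel1 (γ : PSL2Z) : oF γ + oF (γ * pS) ∈ ManinJ := by
  have h : oF γ + oF (γ * pS) = oF γ * ((1 : MAZ) + oF pS) := by
    rw [mul_add, mul_one, ← map_mul]
  rw [h]
  exact Ideal.mul_mem_left _ _ (Ideal.subset_span (by left; rfl))

lemma rel2 (γ : PSL2Z) : oF γ + oF (γ * pU) + oF (γ * pU ^ 2) ∈ ManinJ := by
  have h : oF γ + oF (γ * pU) + oF (γ * pU ^ 2) =
      oF γ * ((1 : MAZ) + oF pU + oF (pU ^ 2)) := by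
    rw [mul_add, mul_add, mul_one, ← map_mul, ← map_mul]
  rw [h]
  exact Ideal.mul_mem_left _ _ (Ideal.subset_span (by right; rfl))

lemma caseChild (g : PSL2Z) (r : ℚ) (hinf : mobius g cInf = some r)
    (h0 : mobius g cZero = parentC (some r)) :
    oF g - hC (some r) + hC (parentC (some r)) ∈ ManinJ := by
  have hg : g = gE r := by
    apply endpoints_inj
    · rw [h0, gE_zero]
    · rw [hinf, gE_inf]
  have he : oF g - hC (some r) + hC (parentC (some r)) = 0 := by
    rw [hg, hC_some]
    abel
  rw [he]
  exact zero_mem _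

lemma caseParent (g : PSL2Z) (r : ℚ) (h0 : mobius g cZero = some r)
    (hinf : mobius g cInf = parentC (some r)) :
    oF g - hC (parentC (some r)) + hC (some r) ∈ ManinJ := by
  have hg : g = gE r * pS := by
    apply endpoints_inj
    · rw [h0, mobius_mul, mobius_pS_zero, gE_inf]
    · rw [hinf, mobius_mul, mobius_pS_inf, gE_zero]
  have h2 : g * pS = gE r := by rw [hg, mul_assoc, pS_sq, mul_one]
  have h3 := rel1 g
  rw [h2] at h3
  have he : oF g - hC (parentC (some r)) + hC (some r) = oF g + oF (gE r) := by
    rw [hC_some]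
    abel
  rw [he]
  exact h3

lemma lemmaA_aux : ∀ n : ℕ, ∀ g : PSL2Z,
    cden (mobius g cZero) + cden (mobius g cInf) ≤ n →
    oF g - hC (mobius g cInf) + hC (mobius g cZero) ∈ ManinJ := by
  intro n
  induction n using Nat.strong_induction_on with
  | _ n IH =>
    have core : ∀ g : PSL2Z, cden (mobius g cZero) + cden (mobius g cInf) ≤ n →
        cden (mobius g cInf) ≤ cden (mobius g cZero) →
        oF g - hC (mobius g cInf) + hC (mobius g cZero) ∈ ManinJ := by
      intro g hn hord
      cases ha : mobius g cZero with
      | none =>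
          exfalso
          rw [ha, cden_none, Nat.le_zero, cden_eq_zero] at hord
          have : cZero = cInf := mobius_inj (ha.trans hord.symm)
          rw [cZero_eq, cInf_eq] at this
          simp at this
      | some r =>
          by_cases hpar : mobius g cInf = parentC (some r)
          · rw [hpar]
            exact caseParent g r ha hpar
          · have hne : mobius g cZero ≠ cInf := by rw [ha, cInf_eq]; exact Option.some_ne_none r
            have htr := trichotomy g hne (by rw [ha] at hord ⊢; exact hord)
            rw [ha] at htr
            rcases htr with h1 | h1 | h1
            · exact absurd h1 hpar
            · -- c = g·1 = parent
              set c := parentC (some r) with hc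
              -- g1 = g * pU * pS : edge (some r) → c,  g2 = g * pU^2 * pS : edge c → b
              have hg1_0 : mobius (g * pU * pS) cZero = some r := by
                rw [mobius_mul, mobius_mul, mobius_pS_zero, mobius_pU_inf, ha]
              have hg1_inf : mobius (g * pU * pS) cInf = c := by
                rw [mobius_mul, mobius_mul, mobius_pS_inf, mobius_pU_zero, h1]
              have hp1 := caseParent (g * pU * pS) r hg1_0 hg1_inf
              rw [← hc] at hp1
              have hU2inf : mobius (pU ^ 2) cInf = some 1 := by
                rw [pow_two, mobius_mul, mobius_pU_inf, mobius_pU_zero]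
              have hU2zero : mobius (pU ^ 2) cZero = cInf := by
                rw [pow_two, mobius_mul, mobius_pU_zero, mobius_pU_one]
              have hg2_0 : mobius (g * pU ^ 2 * pS) cZero = c := by
                rw [mobius_mul, mobius_pS_zero, mobius_mul, hU2inf, h1]
              have hg2_inf : mobius (g * pU ^ 2 * pS) cInf = mobius g cInf := by
                rw [mobius_mul, mobius_pS_inf, mobius_mul, hU2zero]
              have hmeas : cden (mobius (g * pU ^ 2 * pS) cZero) +
                  cden (mobius (g * pU ^ 2 * pS) cInf) < n := by
                rw [hg2_0, hg2_inf]
                have hlt := parent_den_lt r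
                rw [ha] at hn
                rw [hc]
                omega
              have hih := IH _ hmeas (g * pU ^ 2 * pS) (le_refl _)
              rw [hg2_0, hg2_inf] at hih
              -- combine
              have hr2 := rel2 g
              have hra := rel1 (g * pU)
              have hrb := rel1 (g * pU ^ 2)
              have hcomb := (ManinJ.add_mem
                (ManinJ.sub_mem (ManinJ.sub_mem hr2 hra) hrb)
                (ManinJ.add_mem hp1 hih))
              have he : oF g + oF (g * pU) + oF (g * pU ^ 2) -
                  (oF (g * pU) + oF (g * pU * pS)) - (oF (g * pU ^ 2) + oF (g * pU ^ 2 * pS)) +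
                  (oF (g * pU * pS) - hC c + hC (some r) +
                    (oF (g * pU ^ 2 * pS) - hC (mobius g cInf) + hC c)) =
                  oF g - hC (mobius g cInf) + hC (some r) := by abel
              rw [he] at hcomb
              exact hcomb
            · -- c = g·(-1) = parent ; work with g' = g * pS
              set c := parentC (some r) with hc
              have hg'1 : mobius (g * pS) (some 1) = c := by
                exact (mobius_mul g pS _).trans ((congrArg (mobius g) mobius_pS_one).trans h1)
              have hg'0 : mobius (g * pS) cZero = mobius g cInf := by
                rw [mobius_mul, mobius_pS_zero]
              have hg'inf : mobius (g * pS) cInf = some r := by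
                rw [mobius_mul, mobius_pS_inf, ha]
              -- g1' = g' * pU * pS : edge b → c
              have hg1_0 : mobius (g * pS * pU * pS) cZero = mobius g cInf := by
                rw [mobius_mul, mobius_pS_zero, mobius_mul, mobius_pU_inf, hg'0]
              have hg1_inf : mobius (g * pS * pU * pS) cInf = c := by
                rw [mobius_mul, mobius_pS_inf, mobius_mul, mobius_pU_zero, hg'1]
              -- g2' = g' * pU^2 * pS : edge c → (some r)
              have hU2inf : mobius (pU ^ 2) cInf = some 1 := by
                rw [pow_two, mobius_mul, mobius_pU_inf, mobius_pU_zero]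
              have hU2zero : mobius (pU ^ 2) cZero = cInf := by
                rw [pow_two, mobius_mul, mobius_pU_zero, mobius_pU_one]
              have hg2_0 : mobius (g * pS * pU ^ 2 * pS) cZero = c := by
                rw [mobius_mul, mobius_pS_zero, mobius_mul, hU2inf, hg'1]
              have hg2_inf : mobius (g * pS * pU ^ 2 * pS) cInf = some r := by
                rw [mobius_mul, mobius_pS_inf, mobius_mul, hU2zero, hg'inf]
              have hchild := caseChild (g * pS * pU ^ 2 * pS) r hg2_inf hg2_0
              rw [← hc] at hchild
              have hmeas : cden (mobius (g * pS * pU * pS) cZero) +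
                  cden (mobius (g * pS * pU * pS) cInf) < n := by
                rw [hg1_0, hg1_inf]
                have hlt := parent_den_lt r
                rw [ha] at hn
                rw [hc]
                omega
              have hih := IH _ hmeas (g * pS * pU * pS) (le_refl _)
              rw [hg1_0, hg1_inf] at hih
              have hr1 := rel1 g
              have hr2 := rel2 (g * pS)
              have hra := rel1 (g * pS * pU)
              have hrb := rel1 (g * pS * pU ^ 2)
              have hcomb := ManinJ.sub_mem
                (ManinJ.add_mem (ManinJ.add_mem (ManinJ.sub_mem hr1 hr2) hra) hrb)
                (ManinJ.add_mem hih hchild)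
              have he : oF g + oF (g * pS) - (oF (g * pS) + oF (g * pS * pU) + oF (g * pS * pU ^ 2)) +
                  (oF (g * pS * pU) + oF (g * pS * pU * pS)) +
                  (oF (g * pS * pU ^ 2) + oF (g * pS * pU ^ 2 * pS)) -
                  (oF (g * pS * pU * pS) - hC c + hC (mobius g cInf) +
                    (oF (g * pS * pU ^ 2 * pS) - hC (some r) + hC c)) =
                  oF g - hC (mobius g cInf) + hC (some r) := by abel
              rw [he] at hcomb
              exact hcomb
    intro g hn
    by_cases hord : cden (mobius g cInf) ≤ cden (mobius g cZero)
    · exact core g hn hord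
    · have h0' : mobius (g * pS) cZero = mobius g cInf := by
        rw [mobius_mul, mobius_pS_zero]
      have hinf' : mobius (g * pS) cInf = mobius g cZero := by
        rw [mobius_mul, mobius_pS_inf]
      have hcore := core (g * pS) (by rw [h0', hinf']; omega)
        (by rw [h0', hinf']; omega)
      rw [h0', hinf'] at hcore
      have hr1 := rel1 g
      have hcomb := ManinJ.sub_mem hr1 hcore
      have he : oF g + oF (g * pS) - (oF (g * pS) - hC (mobius g cZero) + hC (mobius g cInf)) =
          oF g - hC (mobius g cInf) + hC (mobius g cZero) := by abel
      rw [he] at hcomb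
      exact hcomb

lemma lemmaA (g : PSL2Z) :
    oF g - hC (mobius g cInf) + hC (mobius g cZero) ∈ ManinJ :=
  lemmaA_aux _ g (le_refl _)

end Main
-- Section 6: Theta1 properties and the final theorem
section Final

local notation "oF" => MonoidAlgebra.of ℤ PSL2Z

lemma Theta1_zero : Theta1 0 = 0 := by
  unfold Theta1
  rw [MonoidAlgebra.coeff_zero]
  exact Finsupp.sum_zero_index

lemma Theta1_single (γ : PSL2Z) (m : ℤ) :
    Theta1 (MonoidAlgebra.single γ m) =
      m • (FreeAbelianGroup.of (mobius γ cInf) - FreeAbelianGroup.of (mobius γ cZero)) := by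
  unfold Theta1
  rw [MonoidAlgebra.coeff_single]
  exact Finsupp.sum_single_index (by simp)

lemma Theta1_add (x y : MAZ) : Theta1 (x + y) = Theta1 x + Theta1 y := by
  unfold Theta1
  rw [MonoidAlgebra.coeff_add]
  exact Finsupp.sum_add_index' (fun γ => by simp) (fun γ m n => add_smul m n _)

/-- pushforward by `δ` -/
noncomputable def push (δ : PSL2Z) : FreeAbelianGroup Cusp →+ FreeAbelianGroup Cusp :=
  FreeAbelianGroup.lift (fun x => FreeAbelianGroup.of (mobius δ x))

lemma Theta1_smul_single (δ : PSL2Z) (m : ℤ) (x : MAZ) :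
    Theta1 (MonoidAlgebra.single δ m * x) = m • push δ (Theta1 x) := by
  induction x using MonoidAlgebra.induction with
  | zero => rw [mul_zero, Theta1_zero, map_zero, smul_zero]
  | single_add γ n f hγ hn ih =>
      rw [mul_add, Theta1_add, Theta1_add, map_add, smul_add, ih]
      congr 1
      rw [MonoidAlgebra.single_mul_single, Theta1_single, Theta1_single,
        AddMonoidHom.map_zsmul, smul_smul, map_sub]
      unfold push
      rw [FreeAbelianGroup.lift_apply_of, FreeAbelianGroup.lift_apply_of, mobius_mul, mobius_mul]

lemma theta_gen1 : Theta1 ((1 : MAZ) + oF pS) = 0 := by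
  have h : ((1 : MAZ) + oF pS) = MonoidAlgebra.single (1 : PSL2Z) (1:ℤ) + MonoidAlgebra.single pS (1:ℤ) := by
    rw [MonoidAlgebra.one_def, MonoidAlgebra.of_apply]
  rw [h, Theta1_add, Theta1_single, Theta1_single, mobius_one, mobius_one,
    mobius_pS_inf, mobius_pS_zero, one_smul, one_smul]
  abel

lemma theta_gen2 : Theta1 ((1 : MAZ) + oF pU + oF (pU ^ 2)) = 0 := by
  have h : ((1 : MAZ) + oF pU + oF (pU ^ 2)) =
      MonoidAlgebra.single (1 : PSL2Z) (1:ℤ) + MonoidAlgebra.single pU (1:ℤ) +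
        MonoidAlgebra.single (pU ^ 2) (1:ℤ) := by
    rw [MonoidAlgebra.one_def, MonoidAlgebra.of_apply, MonoidAlgebra.of_apply]
  have hU2inf : mobius (pU ^ 2) cInf = some 1 := by
    rw [pow_two, mobius_mul, mobius_pU_inf, mobius_pU_zero]
  have hU2zero : mobius (pU ^ 2) cZero = cInf := by
    rw [pow_two, mobius_mul, mobius_pU_zero, mobius_pU_one]
  rw [h, Theta1_add, Theta1_add, Theta1_single, Theta1_single, Theta1_single,
    mobius_one, mobius_one, mobius_pU_inf, mobius_pU_zero, hU2inf, hU2zero,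
    one_smul, one_smul, one_smul]
  abel

lemma theta_mul_zero (x : MAZ) (hx : Theta1 x = 0) (r : MAZ) : Theta1 (r * x) = 0 := by
  induction r using MonoidAlgebra.induction with
  | zero => rw [zero_mul, Theta1_zero]
  | single_add δ m f hδ hm ih =>
      rw [add_mul, Theta1_add, ih, Theta1_smul_single, hx, map_zero, smul_zero, add_zero]

lemma span_sub_ker (z : MAZ) (hz : z ∈ ManinJ) : Theta1 z = 0 := by
  induction hz using Submodule.span_induction with
  | mem x hx =>
      rcases hx with h | h
      · rw [h]; exact theta_gen1
      · rw [h]; exact theta_gen2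
  | zero => exact Theta1_zero
  | add x y _ _ h1 h2 => rw [Theta1_add, h1, h2, add_zero]
  | smul a x _ h => rw [smul_eq_mul]; exact theta_mul_zero x h a

/-- The retraction -/
noncomputable def HH : FreeAbelianGroup Cusp →+ (MAZ ⧸ ManinJ) :=
  FreeAbelianGroup.lift (fun x => Submodule.Quotient.mk (hC x))

lemma HH_of (x : Cusp) : HH (FreeAbelianGroup.of x) = ManinJ.mkQ (hC x) :=
  FreeAbelianGroup.lift_apply_of _ _

lemma mk_eq_HH (z : MAZ) : ManinJ.mkQ z = HH (Theta1 z) := by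
  induction z using MonoidAlgebra.induction with
  | zero => rw [Theta1_zero, map_zero, map_zero]
  | single_add γ m f hγ hm ih =>
      rw [Theta1_add, map_add, map_add, ← ih]
      congr 1
      rw [Theta1_single, AddMonoidHom.map_zsmul, map_sub, HH_of, HH_of]
      have h1 : MonoidAlgebra.single γ m = m • (oF γ) := by
        rw [MonoidAlgebra.of_apply, MonoidAlgebra.smul_single, smul_eq_mul, mul_one]
      rw [h1, map_zsmul]
      congr 1
      rw [← map_sub]
      rw [Submodule.mkQ_apply, Submodule.mkQ_apply, Submodule.Quotient.eq]
      have he : oF γ - (hC (mobius γ cInf) - hC (mobius γ cZero)) =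
          oF γ - hC (mobius γ cInf) + hC (mobius γ cZero) := by abel
      rw [he]
      exact lemmaA γ

lemma ker_eq_ManinJ : {g : MAZ | Theta1 g = 0} = (ManinJ : Set MAZ) := by
  ext z
  simp only [Set.mem_setOf_eq, SetLike.mem_coe]
  constructor
  · intro hz
    have h := mk_eq_HH z
    rw [hz, map_zero] at h
    rwa [Submodule.mkQ_apply, Submodule.Quotient.mk_eq_zero] at h
  · intro hz
    exact span_sub_ker z hz

end Final


/-- Manin's theorem : the kernel of `Θ1` is the left ideal of `ℤ[Γ]` generated by
`1 + S` and `1 + U + U²`. -/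
theorem ker_Theta1_eq_Manin_ideal :
    {g : MonoidAlgebra ℤ PSL2Z | Theta1 g = 0} =
      (Ideal.span {(1 : MonoidAlgebra ℤ PSL2Z) + MonoidAlgebra.of ℤ PSL2Z pS,
          (1 : MonoidAlgebra ℤ PSL2Z) + MonoidAlgebra.of ℤ PSL2Z pU +
            MonoidAlgebra.of ℤ PSL2Z (pU ^ 2)} :
        Ideal (MonoidAlgebra ℤ PSL2Z)) := by
  exact ker_eq_ManinJ
end

section
/- Let g = Σ λ_{α,β} (α,β) ∈ ℤ[Γ²] (a finite ℤ-linear combination of pairs). Then g belongs to the left ideal of ℤ[Γ²] generated by (1,1)+(S,S) and (1,1)+(U,U)+(U²,U²) if and only if for every γ ∈ Γ, the element Σ_{(α,β) : βα⁻¹ = γ} λ_{α,β} α of ℤ[Γ] belongs to the left ideal of ℤ[Γ] generated by 1+S and 1+U+U². -/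
open MvPolynomial

attribute [local instance] Classical.propDecidable
section Aux

variable {G : Type*} [Group G]

/-- Reducible cast from `Finsupp` to `MonoidAlgebra`. -/
abbrev toMA {H : Type*} (f : H →₀ ℤ) : MonoidAlgebra ℤ H := MonoidAlgebra.ofCoeff f

/-- The γ-diagonal slice map `ℤ[G×G] → ℤ[G]`. -/
noncomputable def Psi (g : MonoidAlgebra ℤ (G × G)) (γ : G) : MonoidAlgebra ℤ G :=
  Finsupp.sum g.coeff fun p n => if p.2 * p.1⁻¹ = γ then (MonoidAlgebra.single p.1 n : MonoidAlgebra ℤ G) else 0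

lemma Psi_zero (γ : G) : Psi (0 : MonoidAlgebra ℤ (G × G)) γ = 0 := by
  simp [Psi]

lemma Psi_single (p : G × G) (n : ℤ) (γ : G) :
    Psi (MonoidAlgebra.single p n : MonoidAlgebra ℤ (G × G)) γ =
      if p.2 * p.1⁻¹ = γ then (MonoidAlgebra.single p.1 n : MonoidAlgebra ℤ G) else 0 := by
  unfold Psi
  rw [MonoidAlgebra.coeff_single, Finsupp.sum_single_index]
  simp

lemma Psi_add (g h : MonoidAlgebra ℤ (G × G)) (γ : G) :
    Psi (g + h) γ = Psi g γ + Psi h γ := by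
  unfold Psi
  rw [MonoidAlgebra.coeff_add, Finsupp.sum_add_index]
  · intro p _; simp
  · intro p _ n m
    split_ifs
    · rw [MonoidAlgebra.single_add]
    · rw [add_zero]

/-- The section `ℤ[G] → ℤ[G×G]` dropping `a` into the γ-slice. -/
noncomputable def iota (γ : G) (a : MonoidAlgebra ℤ G) : MonoidAlgebra ℤ (G × G) :=
  MonoidAlgebra.ofCoeff (Finsupp.mapDomain (fun α => (α, γ * α)) a.coeff)

lemma iota_zero (γ : G) : iota γ (0 : MonoidAlgebra ℤ G) = 0 :=
  congrArg MonoidAlgebra.ofCoeff Finsupp.mapDomain_zero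

lemma iota_add (γ : G) (a b : MonoidAlgebra ℤ G) :
    iota γ (a + b) = iota γ a + iota γ b :=
  congrArg MonoidAlgebra.ofCoeff Finsupp.mapDomain_add

lemma iota_single (γ : G) (α : G) (n : ℤ) :
    iota γ (MonoidAlgebra.single α n : MonoidAlgebra ℤ G)
      = (MonoidAlgebra.single (α, γ * α) n : MonoidAlgebra ℤ (G × G)) :=
  congrArg MonoidAlgebra.ofCoeff Finsupp.mapDomain_single

lemma Psi_mul_single (a : MonoidAlgebra ℤ (G × G)) (δ : G) (c : ℤ) (γ : G) :
    Psi (a * MonoidAlgebra.single (δ, δ) c) γ = Psi a γ * MonoidAlgebra.single δ c := by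
  induction a using MonoidAlgebra.induction with
  | zero =>
    show Psi ((0 : MonoidAlgebra ℤ (G × G)) * MonoidAlgebra.single (δ, δ) c) γ
        = Psi (0 : MonoidAlgebra ℤ (G × G)) γ * MonoidAlgebra.single δ c
    rw [zero_mul, Psi_zero, zero_mul]
  | single_add p n f hp hn ih =>
    rw [add_mul, Psi_add, ih, Psi_add, add_mul]
    congr 1
    have hs : MonoidAlgebra.single p n * MonoidAlgebra.single (δ, δ) c
        = MonoidAlgebra.single (p.1 * δ, p.2 * δ) (n * c) := by
      rw [MonoidAlgebra.single_mul_single]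
      rfl
    rw [hs, Psi_single, Psi_single]
    have hcond : (p.1 * δ, p.2 * δ).2 * (p.1 * δ, p.2 * δ).1⁻¹ = p.2 * p.1⁻¹ := by
      simp [mul_inv_rev, mul_assoc]
    rw [hcond]
    split_ifs
    · exact (MonoidAlgebra.single_mul_single ..).symm
    · rw [zero_mul]

lemma iota_mul_single (γ : G) (a : MonoidAlgebra ℤ G) (δ : G) (c : ℤ) :
    iota γ (a * MonoidAlgebra.single δ c) = iota γ a * MonoidAlgebra.single (δ, δ) c := by
  induction a using MonoidAlgebra.induction with
  | zero =>
    show iota γ ((0 : MonoidAlgebra ℤ G) * MonoidAlgebra.single δ c)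
        = iota γ (0 : MonoidAlgebra ℤ G) * MonoidAlgebra.single (δ, δ) c
    rw [zero_mul, iota_zero, zero_mul]
  | single_add α n f hα hn ih =>
    rw [add_mul, iota_add, ih, iota_add, add_mul]
    congr 1
    rw [MonoidAlgebra.single_mul_single]
    rw [iota_single]
    rw [iota_single]
    rw [MonoidAlgebra.single_mul_single]
    congr 1
    simp [Prod.ext_iff, mul_assoc]

lemma recon (g : MonoidAlgebra ℤ (G × G)) (T : Finset G)
    (hT : ∀ p ∈ g.coeff.support, p.2 * p.1⁻¹ ∈ T) :
    ∑ γ ∈ T, iota γ (Psi g γ) = g := by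
  induction g using MonoidAlgebra.induction with
  | zero =>
    show ∑ γ ∈ T, iota γ (Psi (0 : MonoidAlgebra ℤ (G × G)) γ)
        = (0 : MonoidAlgebra ℤ (G × G))
    simp [Psi_zero, iota_zero]
  | single_add p n f hp hn ih =>
    have hmemp : p ∈ (MonoidAlgebra.single p n + f).coeff.support := by
      rw [Finsupp.mem_support_iff]
      have hfp : f.coeff p = 0 := Finsupp.notMem_support_iff.mp hp
      rw [MonoidAlgebra.coeff_add, Finsupp.add_apply, hfp, MonoidAlgebra.coeff_single,
        Finsupp.single_eq_same, add_zero]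
      exact hn
    have hsub : f.coeff.support ⊆ (MonoidAlgebra.single p n + f).coeff.support := by
      intro q hq
      rw [Finsupp.mem_support_iff] at hq ⊢
      have hqp : q ≠ p := by rintro rfl; exact hp (Finsupp.mem_support_iff.mpr hq)
      rw [MonoidAlgebra.coeff_add, Finsupp.add_apply, MonoidAlgebra.coeff_single,
        Finsupp.single_eq_of_ne hqp, zero_add]
      exact hq
    have ih' : ∑ γ ∈ T, iota γ (Psi f γ) = f := ih (fun q hq => hT q (hsub hq))
    have hTp : p.2 * p.1⁻¹ ∈ T := hT p hmemp
    have hstep : ∀ γ ∈ T, iota γ (Psi (MonoidAlgebra.single p n + f) γ)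
        = (if p.2 * p.1⁻¹ = γ then MonoidAlgebra.single p n else 0)
          + iota γ (Psi f γ) := by
      intro γ _
      rw [Psi_add, iota_add, Psi_single]
      congr 1
      split_ifs with h
      · rw [iota_single]
        congr 1
        exact Prod.ext rfl (by rw [← h]; group)
      · exact iota_zero γ
    rw [Finset.sum_congr rfl hstep, Finset.sum_add_distrib, ih']
    congr 1
    rw [Finset.sum_ite_eq T (p.2 * p.1⁻¹) (fun _ => MonoidAlgebra.single p n)]
    exact if_pos hTp

end Aux

section Aux2

variable {G : Type*} [Group G]

lemma Psi_mul_two (a : MonoidAlgebra ℤ (G × G)) (δ₁ δ₂ : G) (c₁ c₂ : ℤ) (γ : G) :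
    Psi (a * (MonoidAlgebra.single (δ₁, δ₁) c₁ + MonoidAlgebra.single (δ₂, δ₂) c₂)) γ
      = Psi a γ * (MonoidAlgebra.single δ₁ c₁ + MonoidAlgebra.single δ₂ c₂) := by
  simp only [mul_add, Psi_add, Psi_mul_single]

lemma Psi_mul_three (a : MonoidAlgebra ℤ (G × G)) (δ₁ δ₂ δ₃ : G) (c₁ c₂ c₃ : ℤ) (γ : G) :
    Psi (a * (MonoidAlgebra.single (δ₁, δ₁) c₁ + MonoidAlgebra.single (δ₂, δ₂) c₂
        + MonoidAlgebra.single (δ₃, δ₃) c₃)) γ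
      = Psi a γ * (MonoidAlgebra.single δ₁ c₁ + MonoidAlgebra.single δ₂ c₂
        + MonoidAlgebra.single δ₃ c₃) := by
  simp only [mul_add, Psi_add, Psi_mul_single]

lemma iota_mul_two (γ : G) (a : MonoidAlgebra ℤ G) (δ₁ δ₂ : G) (c₁ c₂ : ℤ) :
    iota γ a * (MonoidAlgebra.single (δ₁, δ₁) c₁ + MonoidAlgebra.single (δ₂, δ₂) c₂)
      = iota γ (a * (MonoidAlgebra.single δ₁ c₁ + MonoidAlgebra.single δ₂ c₂)) := by
  simp only [mul_add, iota_add, iota_mul_single]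

lemma iota_mul_three (γ : G) (a : MonoidAlgebra ℤ G) (δ₁ δ₂ δ₃ : G) (c₁ c₂ c₃ : ℤ) :
    iota γ a * (MonoidAlgebra.single (δ₁, δ₁) c₁ + MonoidAlgebra.single (δ₂, δ₂) c₂
        + MonoidAlgebra.single (δ₃, δ₃) c₃)
      = iota γ (a * (MonoidAlgebra.single δ₁ c₁ + MonoidAlgebra.single δ₂ c₂
        + MonoidAlgebra.single δ₃ c₃)) := by
  simp only [mul_add, iota_add, iota_mul_single]

end Aux2

lemma Psi_spec (g : MonoidAlgebra ℤ (PSL2Z × PSL2Z)) (γ : PSL2Z) :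
    (Finsupp.sum g.coeff fun p n =>
        if p.2 * p.1⁻¹ = γ then (MonoidAlgebra.single p.1 n : MonoidAlgebra ℤ PSL2Z) else 0)
      = Psi g γ := by
  unfold Psi
  congr 1
  funext p n
  split_ifs <;> rfl

/-- `g = Σ λ_{α,β}(α,β)` lies in the left ideal of `ℤ[Γ²]` generated by `(1,1)+(S,S)` and
`(1,1)+(U,U)+(U²,U²)` iff for every `γ ∈ Γ`, the element `Σ_{βα⁻¹ = γ} λ_{α,β} α` of `ℤ[Γ]`
lies in the left ideal generated by `1+S` and `1+U+U²`. -/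
theorem mem_ID_iff_diagonal_sums (g : MonoidAlgebra ℤ (PSL2Z × PSL2Z)) :
    g ∈ Ideal.span ({(1 : MonoidAlgebra ℤ (PSL2Z × PSL2Z)) +
          MonoidAlgebra.of ℤ (PSL2Z × PSL2Z) (pS, pS),
        (1 : MonoidAlgebra ℤ (PSL2Z × PSL2Z)) + MonoidAlgebra.of ℤ (PSL2Z × PSL2Z) (pU, pU) +
          MonoidAlgebra.of ℤ (PSL2Z × PSL2Z) (pU ^ 2, pU ^ 2)} :
      Set (MonoidAlgebra ℤ (PSL2Z × PSL2Z))) ↔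
    ∀ γ : PSL2Z,
      (Finsupp.sum g.coeff fun p n =>
          if p.2 * p.1⁻¹ = γ then (MonoidAlgebra.single p.1 n : MonoidAlgebra ℤ PSL2Z) else 0) ∈
        Ideal.span ({(1 : MonoidAlgebra ℤ PSL2Z) + MonoidAlgebra.of ℤ PSL2Z pS,
            (1 : MonoidAlgebra ℤ PSL2Z) + MonoidAlgebra.of ℤ PSL2Z pU +
              MonoidAlgebra.of ℤ PSL2Z (pU ^ 2)} : Set (MonoidAlgebra ℤ PSL2Z)) := by
  constructor
  · intro hg γ
    rw [Psi_spec]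
    show Psi g γ ∈ Ideal.span ({(1 : MonoidAlgebra ℤ PSL2Z) + MonoidAlgebra.of ℤ PSL2Z pS,
        (1 : MonoidAlgebra ℤ PSL2Z) + MonoidAlgebra.of ℤ PSL2Z pU +
          MonoidAlgebra.of ℤ PSL2Z (pU ^ 2)} : Set (MonoidAlgebra ℤ PSL2Z))
    obtain ⟨a, b, hab⟩ := Ideal.mem_span_pair.mp hg
    refine Ideal.mem_span_pair.mpr ⟨Psi a γ, Psi b γ, ?_⟩
    show Psi a γ * ((MonoidAlgebra.single (1 : PSL2Z) 1 + MonoidAlgebra.single pS 1 :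
          MonoidAlgebra ℤ PSL2Z))
        + Psi b γ * ((MonoidAlgebra.single (1 : PSL2Z) 1 + MonoidAlgebra.single pU 1
            + MonoidAlgebra.single (pU ^ 2) 1 : MonoidAlgebra ℤ PSL2Z))
        = Psi g γ
    have e1 : a * ((1 : MonoidAlgebra ℤ (PSL2Z × PSL2Z)) +
          MonoidAlgebra.of ℤ (PSL2Z × PSL2Z) (pS, pS))
        = a * ((MonoidAlgebra.single ((1 : PSL2Z), (1 : PSL2Z)) 1
            + MonoidAlgebra.single (pS, pS) 1 : MonoidAlgebra ℤ (PSL2Z × PSL2Z))) := rfl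
    have e2 : b * ((1 : MonoidAlgebra ℤ (PSL2Z × PSL2Z)) +
          MonoidAlgebra.of ℤ (PSL2Z × PSL2Z) (pU, pU) +
          MonoidAlgebra.of ℤ (PSL2Z × PSL2Z) (pU ^ 2, pU ^ 2))
        = b * ((MonoidAlgebra.single ((1 : PSL2Z), (1 : PSL2Z)) 1
            + MonoidAlgebra.single (pU, pU) 1
            + MonoidAlgebra.single (pU ^ 2, pU ^ 2) 1 : MonoidAlgebra ℤ (PSL2Z × PSL2Z))) := rfl
    rw [← hab, e1, e2, Psi_add, Psi_mul_two, Psi_mul_three]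
  · intro hψ
    simp only [Psi_spec] at hψ
    have hψ' : ∀ γ : PSL2Z, Psi g γ ∈ Ideal.span
        ({(1 : MonoidAlgebra ℤ PSL2Z) + MonoidAlgebra.of ℤ PSL2Z pS,
          (1 : MonoidAlgebra ℤ PSL2Z) + MonoidAlgebra.of ℤ PSL2Z pU +
            MonoidAlgebra.of ℤ PSL2Z (pU ^ 2)} : Set (MonoidAlgebra ℤ PSL2Z)) := hψ
    choose a b hab using fun γ => Ideal.mem_span_pair.mp (hψ' γ)
    have hab' : ∀ γ : PSL2Z,
        a γ * ((MonoidAlgebra.single (1 : PSL2Z) 1 + MonoidAlgebra.single pS 1 :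
            MonoidAlgebra ℤ PSL2Z))
          + b γ * ((MonoidAlgebra.single (1 : PSL2Z) 1 + MonoidAlgebra.single pU 1
              + MonoidAlgebra.single (pU ^ 2) 1 : MonoidAlgebra ℤ PSL2Z))
          = Psi g γ := fun γ => hab γ
    set T := g.coeff.support.image fun p => p.2 * p.1⁻¹ with hTdef
    refine Ideal.mem_span_pair.mpr ⟨∑ γ ∈ T, iota γ (a γ), ∑ γ ∈ T, iota γ (b γ), ?_⟩
    show (∑ γ ∈ T, iota γ (a γ)) * ((MonoidAlgebra.single ((1 : PSL2Z), (1 : PSL2Z)) 1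
          + MonoidAlgebra.single (pS, pS) 1 : MonoidAlgebra ℤ (PSL2Z × PSL2Z)))
        + (∑ γ ∈ T, iota γ (b γ)) * ((MonoidAlgebra.single ((1 : PSL2Z), (1 : PSL2Z)) 1
          + MonoidAlgebra.single (pU, pU) 1 + MonoidAlgebra.single (pU ^ 2, pU ^ 2) 1 :
            MonoidAlgebra ℤ (PSL2Z × PSL2Z)))
        = g
    rw [Finset.sum_mul, Finset.sum_mul, ← Finset.sum_add_distrib]
    have hterm : ∀ γ ∈ T,
        iota γ (a γ) * ((MonoidAlgebra.single ((1 : PSL2Z), (1 : PSL2Z)) 1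
            + MonoidAlgebra.single (pS, pS) 1 : MonoidAlgebra ℤ (PSL2Z × PSL2Z)))
          + iota γ (b γ) * ((MonoidAlgebra.single ((1 : PSL2Z), (1 : PSL2Z)) 1
            + MonoidAlgebra.single (pU, pU) 1 + MonoidAlgebra.single (pU ^ 2, pU ^ 2) 1 :
              MonoidAlgebra ℤ (PSL2Z × PSL2Z)))
          = iota γ (Psi g γ) := by
      intro γ _
      rw [iota_mul_two, iota_mul_three, ← iota_add, hab' γ]
    rw [Finset.sum_congr rfl hterm]
    exact recon g T (fun p hp => Finset.mem_image.mpr ⟨p, hp, rfl⟩)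
end
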